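/- arXiv:2110.02333 — 2 statements merged into one kernel-verified Lean document; each statement's English description precedes it below -/
import Mathlib

section
/- Let U be Haar-uniform on O(N₁) and S a fixed diagonal matrix. Then Var[Σₐ (U_{ka}Sₐₐ)²] ≤ C (‖S‖₄⁴ + ‖S‖₂⁴/N₁) / N₁² for a universal constant C, where ‖S‖_p denotes the ℓ^p norm of the diagonal entries. -/
open MeasureTheory ProbabilityTheory

noncomputable instance matrixMeasurableSpace (m n : Type*) :
    MeasurableSpace (Matrix m n ℝ) :=
  inferInstanceAs (MeasurableSpace (m → n → ℝ))

def IsHaarOrthogonal {n : ℕ} (μ : Measure (Matrix (Fin n) (Fin n) ℝ)) : Prop :=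
  IsProbabilityMeasure μ ∧
  (∀ᵐ U ∂μ, U ∈ Matrix.orthogonalGroup (Fin n) ℝ) ∧
  (∀ Q ∈ Matrix.orthogonalGroup (Fin n) ℝ,
    MeasurePreserving (fun U => Q * U) μ μ ∧ MeasurePreserving (fun U => U * Q) μ μ)

lemma measurable_entry {N : ℕ} (i j : Fin N) :
    Measurable fun M : Matrix (Fin N) (Fin N) ℝ => M i j :=
  (measurable_pi_apply j).comp (measurable_pi_apply i)

lemma measurable_mulRight {N : ℕ} (Q : Matrix (Fin N) (Fin N) ℝ) :
    Measurable fun M : Matrix (Fin N) (Fin N) ℝ => M * Q := by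
  have h : (fun M : Matrix (Fin N) (Fin N) ℝ => M * Q)
      = fun M => (fun i j => ∑ c, M i c * Q c j : Matrix (Fin N) (Fin N) ℝ) := by
    funext M i j; rw [Matrix.mul_apply]
  rw [h]
  exact measurable_pi_lambda _ fun i => measurable_pi_lambda _ fun j =>
    Finset.measurable_sum _ fun c _ => (measurable_entry i c).mul_const _

lemma measurableSet_orth {N : ℕ} :
    MeasurableSet {M : Matrix (Fin N) (Fin N) ℝ | M ∈ Matrix.orthogonalGroup (Fin N) ℝ} := by
  have h : {M : Matrix (Fin N) (Fin N) ℝ | M ∈ Matrix.orthogonalGroup (Fin N) ℝ}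
      = ⋂ i, ⋂ j, {M : Matrix (Fin N) (Fin N) ℝ | ∑ c, M i c * M j c = (1 : Matrix (Fin N) (Fin N) ℝ) i j} := by
    ext M
    simp only [Set.mem_setOf_eq, Matrix.mem_orthogonalGroup_iff, Set.mem_iInter, ← Matrix.ext_iff,
      Matrix.mul_apply, Matrix.transpose_apply]
  rw [h]
  exact MeasurableSet.iInter fun i => MeasurableSet.iInter fun j =>
    measurableSet_eq_fun (Finset.measurable_sum _ fun c _ => (measurable_entry i c).mul (measurable_entry j c)) measurable_const

lemma sum_pair_of_support {N : ℕ} {a b : Fin N} (hab : a ≠ b) (f : Fin N → ℝ)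
    (hf : ∀ c, c ≠ a → c ≠ b → f c = 0) : ∑ c, f c = f a + f b := by
  rw [← Finset.sum_pair hab]
  refine (Finset.sum_subset (Finset.subset_univ _) fun x _ hx => ?_).symm
  simp only [Finset.mem_insert, Finset.mem_singleton, not_or] at hx
  exact hf x hx.1 hx.2

def planeMat {N : ℕ} (a b : Fin N) (c₁ c₂ c₃ c₄ : ℝ) : Matrix (Fin N) (Fin N) ℝ :=
  fun i j => if i = a then (if j = a then c₁ else if j = b then c₂ else 0)
    else if i = b then (if j = a then c₃ else if j = b then c₄ else 0)
    else if i = j then 1 else 0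

lemma planeMat_mem {N : ℕ} {a b : Fin N} (hab : a ≠ b) {c₁ c₂ c₃ c₄ : ℝ}
    (h1 : c₁ * c₁ + c₂ * c₂ = 1) (h2 : c₃ * c₃ + c₄ * c₄ = 1)
    (h3 : c₁ * c₃ + c₂ * c₄ = 0) :
    planeMat a b c₁ c₂ c₃ c₄ ∈ Matrix.orthogonalGroup (Fin N) ℝ := by
  rw [Matrix.mem_orthogonalGroup_iff]
  ext i j
  rw [Matrix.mul_apply, Matrix.one_apply]
  simp only [Matrix.transpose_apply]
  set G := planeMat a b c₁ c₂ c₃ c₄ with hG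
  by_cases hia : i = a
  · have hz : ∀ c, c ≠ a → c ≠ b → G i c * G j c = 0 := by
      intro c hca hcb; simp [hG, planeMat, hia, hca, hcb]
    rw [sum_pair_of_support hab _ hz]
    by_cases hja : j = a
    · have hij : i = j := by rw [hia, hja]
      simp [hG, planeMat, hia, hja, hij, hab, hab.symm]; linarith
    · by_cases hjb : j = b
      · have hij : ¬ i = j := by rw [hia, hjb]; exact hab
        simp [hG, planeMat, hia, hjb, hij, hab, hab.symm]; linarith
      · have hij : ¬ i = j := by rw [hia]; exact fun h => hja h.symm
        simp [hG, planeMat, hia, hja, hjb, hij, hab, hab.symm, Ne.symm hja]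
  · by_cases hib : i = b
    · have hz : ∀ c, c ≠ a → c ≠ b → G i c * G j c = 0 := by
        intro c hca hcb; simp [hG, planeMat, hia, hib, hca, hcb]
      rw [sum_pair_of_support hab _ hz]
      by_cases hja : j = a
      · have hij : ¬ i = j := by rw [hib, hja]; exact hab.symm
        simp [hG, planeMat, hib, hja, hij, hia, hab, hab.symm]; linarith
      · by_cases hjb : j = b
        · have hij : i = j := by rw [hib, hjb]
          simp [hG, planeMat, hib, hjb, hij, hia, hab, hab.symm]; linarith
        · have hij : ¬ i = j := by rw [hib]; exact fun h => hjb h.symm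
          simp [hG, planeMat, hia, hib, hja, hjb, hij, hab, hab.symm, Ne.symm hjb]
    · by_cases hja : j = a
      · have hz : ∀ c, c ≠ a → c ≠ b → G i c * G j c = 0 := by
          intro c hca hcb; simp [hG, planeMat, hja, hca, hcb]
        rw [sum_pair_of_support hab _ hz]
        have hij : ¬ i = j := by rw [hja]; exact hia
        simp [hG, planeMat, hia, hib, hja, hij, hab, hab.symm]
      · by_cases hjb : j = b
        · have hz : ∀ c, c ≠ a → c ≠ b → G i c * G j c = 0 := by
            intro c hca hcb; simp [hG, planeMat, hjb, hca, hcb]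
          rw [sum_pair_of_support hab _ hz]
          have hij : ¬ i = j := by rw [hjb]; exact hib
          simp [hG, planeMat, hia, hib, hjb, hij, hab, hab.symm]
        · have key : ∀ c, G i c * G j c = if i = c then (if j = c then (1:ℝ) else 0) else 0 := by
            intro c
            by_cases hic : i = c
            · have hca : ¬ c = a := hic ▸ hia
              have hcb : ¬ c = b := hic ▸ hib
              simp [hG, planeMat, hca, hcb, hia, hib, hja, hjb, hic]
            · simp [hG, planeMat, hia, hib, hic]
          rw [Finset.sum_congr rfl fun c _ => key c, Finset.sum_ite_eq]
          by_cases hij : i = j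
          · simp [hij]
          · have hji : ¬ j = i := fun h => hij h.symm
            simp [hij, hji]

-- column action
lemma mulRight_planeMat_col_a {N : ℕ} {a b : Fin N} (hab : a ≠ b) (c₁ c₂ c₃ c₄ : ℝ)
    (M : Matrix (Fin N) (Fin N) ℝ) (k : Fin N) :
    (M * planeMat a b c₁ c₂ c₃ c₄) k a = M k a * c₁ + M k b * c₃ := by
  rw [Matrix.mul_apply]
  rw [sum_pair_of_support hab _ (fun c hca hcb => by simp [planeMat, hca, hcb])]
  simp [planeMat, hab, hab.symm]

lemma mulRight_planeMat_col_b {N : ℕ} {a b : Fin N} (hab : a ≠ b) (c₁ c₂ c₃ c₄ : ℝ)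
    (M : Matrix (Fin N) (Fin N) ℝ) (k : Fin N) :
    (M * planeMat a b c₁ c₂ c₃ c₄) k b = M k a * c₂ + M k b * c₄ := by
  rw [Matrix.mul_apply]
  rw [sum_pair_of_support hab _ (fun c hca hcb => by simp [planeMat, hca, hcb])]
  simp [planeMat, hab, hab.symm]

lemma swapM_mem {N : ℕ} {a b : Fin N} (hab : a ≠ b) :
    planeMat a b 0 1 1 0 ∈ Matrix.orthogonalGroup (Fin N) ℝ :=
  planeMat_mem hab (by norm_num) (by norm_num) (by norm_num)

noncomputable def rs : ℝ := (Real.sqrt 2)⁻¹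

lemma rs_sq : rs * rs = 1/2 := by
  rw [rs, ← mul_inv, Real.mul_self_sqrt (by norm_num : (0:ℝ) ≤ 2)]
  norm_num

lemma rotM_mem {N : ℕ} {a b : Fin N} (hab : a ≠ b) :
    planeMat a b rs rs (-rs) rs ∈ Matrix.orthogonalGroup (Fin N) ℝ := by
  have h := rs_sq
  exact planeMat_mem hab (by linarith) (by nlinarith) (by ring)

-- integral invariance
lemma integral_comp_mulRight {N : ℕ} {μ : Measure (Matrix (Fin N) (Fin N) ℝ)}
    (h : IsHaarOrthogonal μ) {Q : Matrix (Fin N) (Fin N) ℝ}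
    (hQ : Q ∈ Matrix.orthogonalGroup (Fin N) ℝ)
    (g : Matrix (Fin N) (Fin N) ℝ → ℝ) (hg : Measurable g) :
    ∫ M, g (M * Q) ∂μ = ∫ M, g M ∂μ := by
  have hmp := (h.2.2 Q hQ).2
  have h2 := integral_map (μ := μ) hmp.measurable.aemeasurable hg.aestronglyMeasurable
  rw [hmp.map_eq] at h2
  exact h2.symm

lemma integrable_of_orth_bound {N : ℕ} {μ : Measure (Matrix (Fin N) (Fin N) ℝ)}
    [IsFiniteMeasure μ] (hmem : ∀ᵐ M ∂μ, M ∈ Matrix.orthogonalGroup (Fin N) ℝ)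
    {g : Matrix (Fin N) (Fin N) ℝ → ℝ} (hg : Measurable g) (C : ℝ)
    (hC : ∀ M ∈ Matrix.orthogonalGroup (Fin N) ℝ, ‖g M‖ ≤ C) : Integrable g μ :=
  memLp_one_iff_integrable.mp
    (MemLp.of_bound hg.aestronglyMeasurable C (hmem.mono fun M hM => hC M hM))

lemma orth_row_sq_sum {N : ℕ} {M : Matrix (Fin N) (Fin N) ℝ}
    (hM : M ∈ Matrix.orthogonalGroup (Fin N) ℝ) (k : Fin N) :
    ∑ a, M k a ^ 2 = 1 := by
  have h := hM
  rw [Matrix.mem_orthogonalGroup_iff] at h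
  have h2 : (M * M.transpose) k k = (1 : Matrix (Fin N) (Fin N) ℝ) k k := by rw [h]
  rw [Matrix.mul_apply, Matrix.one_apply_eq] at h2
  simp only [Matrix.transpose_apply] at h2
  rw [← h2]
  exact Finset.sum_congr rfl fun a _ => sq (M k a) ▸ by ring

lemma orth_entry_sq_le {N : ℕ} {M : Matrix (Fin N) (Fin N) ℝ}
    (hM : M ∈ Matrix.orthogonalGroup (Fin N) ℝ) (k a : Fin N) : M k a ^ 2 ≤ 1 := by
  rw [← orth_row_sq_sum hM k]
  exact Finset.single_le_sum (fun b _ => sq_nonneg (M k b)) (Finset.mem_univ a)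

section Core
variable {N : ℕ}

lemma core_bound (hN : 0 < N) {μ : Measure (Matrix (Fin N) (Fin N) ℝ)}
    (h : IsHaarOrthogonal μ) (d : Fin N → ℝ) (k : Fin N) :
    (∫ M, (∑ a, (M k a * d a) ^ 2) ^ 2 ∂μ) - (∫ M, ∑ a, (M k a * d a) ^ 2 ∂μ) ^ 2
      ≤ 2 * (∑ a, d a ^ 4) / (N : ℝ) ^ 2 := by
  obtain ⟨hprob, hmem, hinv⟩ := h
  have h' : IsHaarOrthogonal μ := ⟨hprob, hmem, hinv⟩
  set m : Fin N → Fin N → ℝ := fun a b => ∫ M, (M k a) ^ 2 * (M k b) ^ 2 ∂μ with hm_def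
  set e : Fin N → ℝ := fun a => ∫ M, (M k a) ^ 2 ∂μ with he_def
  -- measurability of basic integrands
  have meas_e : ∀ a : Fin N, Measurable fun M : Matrix (Fin N) (Fin N) ℝ => (M k a) ^ 2 :=
    fun a => (measurable_entry k a).pow_const 2
  have meas_m : ∀ a b : Fin N,
      Measurable fun M : Matrix (Fin N) (Fin N) ℝ => (M k a) ^ 2 * (M k b) ^ 2 :=
    fun a b => (meas_e a).mul (meas_e b)
  -- integrability
  have hint_e : ∀ a, Integrable (fun M => (M k a) ^ 2) μ := fun a =>
    integrable_of_orth_bound hmem (meas_e a) 1 fun M hM => by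
      rw [Real.norm_eq_abs, abs_of_nonneg (sq_nonneg _)]
      exact orth_entry_sq_le hM k a
  have hint_m : ∀ a b, Integrable (fun M => (M k a) ^ 2 * (M k b) ^ 2) μ := fun a b =>
    integrable_of_orth_bound hmem (meas_m a b) 1 fun M hM => by
      rw [Real.norm_eq_abs, abs_of_nonneg (mul_nonneg (sq_nonneg _) (sq_nonneg _))]
      exact mul_le_one₀ (orth_entry_sq_le hM k a) (sq_nonneg _) (orth_entry_sq_le hM k b)
  -- swap invariance
  have hswap_e : ∀ a b : Fin N, e a = e b := by
    intro a b
    rcases eq_or_ne a b with rfl | hab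
    · rfl
    · have hg := meas_e a
      have h1 := integral_comp_mulRight h' (swapM_mem hab) _ hg
      have h2 : (fun M : Matrix (Fin N) (Fin N) ℝ =>
          ((M * planeMat a b 0 1 1 0) k a) ^ 2) = fun M => (M k b) ^ 2 := by
        funext M; rw [mulRight_planeMat_col_a hab]; ring
      rw [h2] at h1
      exact h1.symm
  have hswap_m : ∀ a b : Fin N, m a a = m b b := by
    intro a b
    rcases eq_or_ne a b with rfl | hab
    · rfl
    · have hg := meas_m a a
      have h1 := integral_comp_mulRight h' (swapM_mem hab) _ hg
      have h2 : (fun M : Matrix (Fin N) (Fin N) ℝ =>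
          ((M * planeMat a b 0 1 1 0) k a) ^ 2 * ((M * planeMat a b 0 1 1 0) k a) ^ 2)
          = fun M => (M k b) ^ 2 * (M k b) ^ 2 := by
        funext M; rw [mulRight_planeMat_col_a hab]; ring
      rw [h2] at h1
      exact h1.symm
  -- rotation: m a b = m a a / 3 for a ≠ b
  have hrot : ∀ a b : Fin N, a ≠ b → m a b = m a a / 3 := by
    intro a b hab
    set R := planeMat a b rs rs (-rs) rs with hR
    have hRmem := rotM_mem (N := N) hab
    -- m a a as integral of F, m b b as integral of G
    have hFa : (fun M : Matrix (Fin N) (Fin N) ℝ =>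
        ((M * R) k a) ^ 2 * ((M * R) k a) ^ 2)
        = fun M => (M k a * rs + M k b * (-rs)) ^ 2 * (M k a * rs + M k b * (-rs)) ^ 2 := by
      funext M; rw [hR, mulRight_planeMat_col_a hab]
    have hFb : (fun M : Matrix (Fin N) (Fin N) ℝ =>
        ((M * R) k b) ^ 2 * ((M * R) k b) ^ 2)
        = fun M => (M k a * rs + M k b * rs) ^ 2 * (M k a * rs + M k b * rs) ^ 2 := by
      funext M; rw [hR, mulRight_planeMat_col_b hab]
    have measF : Measurable fun M : Matrix (Fin N) (Fin N) ℝ =>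
        (M k a * rs + M k b * (-rs)) ^ 2 * (M k a * rs + M k b * (-rs)) ^ 2 := by
      have hb : Measurable fun M : Matrix (Fin N) (Fin N) ℝ =>
          M k a * rs + M k b * (-rs) :=
        ((measurable_entry k a).mul_const rs).add ((measurable_entry k b).mul_const (-rs))
      exact (hb.pow_const 2).mul (hb.pow_const 2)
    have measG : Measurable fun M : Matrix (Fin N) (Fin N) ℝ =>
        (M k a * rs + M k b * rs) ^ 2 * (M k a * rs + M k b * rs) ^ 2 := by
      have hb : Measurable fun M : Matrix (Fin N) (Fin N) ℝ => M k a * rs + M k b * rs :=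
        ((measurable_entry k a).mul_const rs).add ((measurable_entry k b).mul_const rs)
      exact (hb.pow_const 2).mul (hb.pow_const 2)
    have hbound : ∀ (s : ℝ) (M : Matrix (Fin N) (Fin N) ℝ),
        M ∈ Matrix.orthogonalGroup (Fin N) ℝ →
        ‖(M k a * rs + M k b * s) ^ 2 * (M k a * rs + M k b * s) ^ 2‖ ≤ 4 → True := fun _ _ _ _ => trivial
    have boundF : ∀ (s : ℝ), s = rs ∨ s = -rs → ∀ M ∈ Matrix.orthogonalGroup (Fin N) ℝ,
        ‖(M k a * rs + M k b * s) ^ 2 * (M k a * rs + M k b * s) ^ 2‖ ≤ 4 := by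
      intro s hs M hM
      have hx := orth_entry_sq_le hM k a
      have hy := orth_entry_sq_le hM k b
      have hrs := rs_sq
      rw [Real.norm_eq_abs, abs_of_nonneg (mul_nonneg (sq_nonneg _) (sq_nonneg _))]
      rcases hs with rfl | rfl
      · have key : (M k a * rs + M k b * rs) ^ 2 * (M k a * rs + M k b * rs) ^ 2
            = ((rs * rs) * (rs * rs)) * ((M k a + M k b) ^ 2 * (M k a + M k b) ^ 2) := by ring
        rw [key, hrs]
        nlinarith [sq_nonneg (M k a + M k b), sq_nonneg (M k a - M k b),
          sq_nonneg ((M k a + M k b) ^ 2 - 4)]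
      · have key : (M k a * rs + M k b * (-rs)) ^ 2 * (M k a * rs + M k b * (-rs)) ^ 2
            = ((rs * rs) * (rs * rs)) * ((M k a - M k b) ^ 2 * (M k a - M k b) ^ 2) := by ring
        rw [key, hrs]
        nlinarith [sq_nonneg (M k a + M k b), sq_nonneg (M k a - M k b),
          sq_nonneg ((M k a - M k b) ^ 2 - 4)]
    have hintF : Integrable (fun M : Matrix (Fin N) (Fin N) ℝ =>
        (M k a * rs + M k b * (-rs)) ^ 2 * (M k a * rs + M k b * (-rs)) ^ 2) μ :=
      integrable_of_orth_bound hmem measF 4 (boundF (-rs) (Or.inr rfl))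
    have hintG : Integrable (fun M : Matrix (Fin N) (Fin N) ℝ =>
        (M k a * rs + M k b * rs) ^ 2 * (M k a * rs + M k b * rs) ^ 2) μ :=
      integrable_of_orth_bound hmem measG 4 (boundF rs (Or.inl rfl))
    have h1 : m a a = ∫ M, (M k a * rs + M k b * (-rs)) ^ 2 * (M k a * rs + M k b * (-rs)) ^ 2 ∂μ := by
      have := integral_comp_mulRight h' hRmem _ (meas_m a a)
      rw [show (fun M : Matrix (Fin N) (Fin N) ℝ =>
        ((M * R) k a) ^ 2 * ((M * R) k a) ^ 2) = _ from hFa] at this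
      exact this.symm
    have h2 : m b b = ∫ M, (M k a * rs + M k b * rs) ^ 2 * (M k a * rs + M k b * rs) ^ 2 ∂μ := by
      have := integral_comp_mulRight h' hRmem _ (meas_m b b)
      rw [show (fun M : Matrix (Fin N) (Fin N) ℝ =>
        ((M * R) k b) ^ 2 * ((M * R) k b) ^ 2) = _ from hFb] at this
      exact this.symm
    -- add the two
    have hsum : m a a + m b b
        = ∫ M, ((M k a * rs + M k b * (-rs)) ^ 2 * (M k a * rs + M k b * (-rs)) ^ 2
          + (M k a * rs + M k b * rs) ^ 2 * (M k a * rs + M k b * rs) ^ 2) ∂μ := by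
      rw [h1, h2, integral_add hintF hintG]
    have hpt : (fun M : Matrix (Fin N) (Fin N) ℝ =>
        ((M k a * rs + M k b * (-rs)) ^ 2 * (M k a * rs + M k b * (-rs)) ^ 2
          + (M k a * rs + M k b * rs) ^ 2 * (M k a * rs + M k b * rs) ^ 2))
        = fun M => (1/2) * ((M k a) ^ 2 * (M k a) ^ 2)
            + (3 * ((M k a) ^ 2 * (M k b) ^ 2) + (1/2) * ((M k b) ^ 2 * (M k b) ^ 2)) := by
      funext M
      have hrs := rs_sq
      have key : (M k a * rs + M k b * (-rs)) ^ 2 * (M k a * rs + M k b * (-rs)) ^ 2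
          + (M k a * rs + M k b * rs) ^ 2 * (M k a * rs + M k b * rs) ^ 2
          = ((rs * rs) * (rs * rs)) *
            (2 * ((M k a) ^ 2 * (M k a) ^ 2) + 12 * ((M k a) ^ 2 * (M k b) ^ 2)
              + 2 * ((M k b) ^ 2 * (M k b) ^ 2)) := by ring
      rw [key, hrs]; ring
    rw [hpt] at hsum
    have e1 : ∫ M, (1/2 * ((M k a) ^ 2 * (M k a) ^ 2)
          + (3 * ((M k a) ^ 2 * (M k b) ^ 2) + 1/2 * ((M k b) ^ 2 * (M k b) ^ 2))) ∂μ
        = (∫ M, 1/2 * ((M k a) ^ 2 * (M k a) ^ 2) ∂μ)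
          + ∫ M, (3 * ((M k a) ^ 2 * (M k b) ^ 2) + 1/2 * ((M k b) ^ 2 * (M k b) ^ 2)) ∂μ :=
      integral_add ((hint_m a a).const_mul _)
        (((hint_m a b).const_mul _).add ((hint_m b b).const_mul _))
    have e2 : ∫ M, (3 * ((M k a) ^ 2 * (M k b) ^ 2) + 1/2 * ((M k b) ^ 2 * (M k b) ^ 2)) ∂μ
        = (∫ M, 3 * ((M k a) ^ 2 * (M k b) ^ 2) ∂μ)
          + ∫ M, 1/2 * ((M k b) ^ 2 * (M k b) ^ 2) ∂μ :=
      integral_add ((hint_m a b).const_mul _) ((hint_m b b).const_mul _)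
    have hIaa : (∫ M, 1/2 * ((M k a) ^ 2 * (M k a) ^ 2) ∂μ) = 1/2 * m a a :=
      integral_const_mul _ _
    have hIab : (∫ M, 3 * ((M k a) ^ 2 * (M k b) ^ 2) ∂μ) = 3 * m a b :=
      integral_const_mul _ _
    have hIbb : (∫ M, 1/2 * ((M k b) ^ 2 * (M k b) ^ 2) ∂μ) = 1/2 * m b b :=
      integral_const_mul _ _
    rw [e1, e2, hIaa, hIab, hIbb] at hsum
    have hdd := hswap_m a b
    linarith

  -- all diagonal moments equal, off-diagonals equal
  set a₀ : Fin N := ⟨0, hN⟩ with ha₀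
  set p : ℝ := m a₀ a₀ with hp_def
  have hm_all : ∀ a b : Fin N, m a b = if b = a then p else p / 3 := by
    intro a b
    by_cases hba : b = a
    · rw [if_pos hba, hba]; exact hswap_m a a₀
    · rw [if_neg hba, hrot a b fun hh => hba hh.symm, hswap_m a a₀]
  -- total sum of fourth moments
  have hsum_m : ∑ a, ∑ b, m a b = 1 := by
    calc ∑ a, ∑ b, m a b
        = ∑ a, ∫ M, ∑ b, (M k a) ^ 2 * (M k b) ^ 2 ∂μ :=
          Finset.sum_congr rfl fun a _ =>
            (integral_finset_sum _ fun b _ => hint_m a b).symm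
      _ = ∫ M, ∑ a, ∑ b, (M k a) ^ 2 * (M k b) ^ 2 ∂μ :=
          (integral_finset_sum _ fun a _ =>
            integrable_finset_sum _ fun b _ => hint_m a b).symm
      _ = ∫ _M, (1 : ℝ) ∂μ := by
          refine integral_congr_ae ?_
          filter_upwards [hmem] with M hM
          rw [← Finset.sum_mul_sum, orth_row_sq_sum hM k, mul_one]
      _ = 1 := by simp
  have inner_sum : ∀ a : Fin N, ∑ b, m a b = (p - p / 3) + (N : ℝ) * (p / 3) := by
    intro a
    have step : ∀ b : Fin N, m a b = (if b = a then p - p / 3 else 0) + p / 3 := by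
      intro b; rw [hm_all a b]
      by_cases hba : b = a
      · rw [if_pos hba, if_pos hba]; ring
      · rw [if_neg hba, if_neg hba]; ring
    rw [Finset.sum_congr rfl fun b _ => step b, Finset.sum_add_distrib,
      Finset.sum_ite_eq' Finset.univ a, Finset.sum_const, Finset.card_univ,
      Fintype.card_fin, nsmul_eq_mul]
    simp
  have hNp : (N : ℝ) * ((p - p / 3) + (N : ℝ) * (p / 3)) = 1 := by
    rw [← hsum_m, Finset.sum_congr rfl fun a _ => inner_sum a, Finset.sum_const,
      Finset.card_univ, Fintype.card_fin, nsmul_eq_mul]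
  -- second moments
  have hsum_e : ∑ a, e a = 1 := by
    calc ∑ a, e a = ∫ M, ∑ a, (M k a) ^ 2 ∂μ :=
          (integral_finset_sum _ fun a _ => hint_e a).symm
      _ = ∫ _M, (1 : ℝ) ∂μ := by
          refine integral_congr_ae ?_
          filter_upwards [hmem] with M hM
          exact orth_row_sq_sum hM k
      _ = 1 := by simp
  have hNne : (N : ℝ) ≠ 0 := Nat.cast_ne_zero.mpr hN.ne'
  have he_all : ∀ a, e a = 1 / (N : ℝ) := by
    intro a
    have hNe : (N : ℝ) * e a = 1 := by
      rw [← hsum_e, Finset.sum_congr rfl fun b _ => hswap_e b a, Finset.sum_const,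
        Finset.card_univ, Fintype.card_fin, nsmul_eq_mul]
    field_simp
    linarith
  -- the two main integrals
  have hEX : ∫ M, ∑ a, (M k a * d a) ^ 2 ∂μ = (∑ a, d a ^ 2) / (N : ℝ) := by
    have hpt : ∀ a : Fin N, (fun M : Matrix (Fin N) (Fin N) ℝ => (M k a * d a) ^ 2)
        = fun M => d a ^ 2 * (M k a) ^ 2 := fun a => funext fun M => by ring
    calc ∫ M, ∑ a, (M k a * d a) ^ 2 ∂μ
        = ∑ a, ∫ M, (M k a * d a) ^ 2 ∂μ :=
          integral_finset_sum _ fun a _ => by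
            rw [hpt a]; exact (hint_e a).const_mul _
      _ = ∑ a, d a ^ 2 * e a := Finset.sum_congr rfl fun a _ => by
            rw [hpt a]; exact integral_const_mul _ _
      _ = ∑ a, d a ^ 2 / (N : ℝ) := Finset.sum_congr rfl fun a _ => by
            rw [he_all a, mul_one_div]
      _ = (∑ a, d a ^ 2) / (N : ℝ) := by rw [Finset.sum_div]
  have hEX2 : ∫ M, (∑ a, (M k a * d a) ^ 2) ^ 2 ∂μ
      = ∑ a, ∑ b, (d a ^ 2 * d b ^ 2) * m a b := by
    have hpt : (fun M : Matrix (Fin N) (Fin N) ℝ => (∑ a, (M k a * d a) ^ 2) ^ 2)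
        = fun M => ∑ a, ∑ b, (d a ^ 2 * d b ^ 2) * ((M k a) ^ 2 * (M k b) ^ 2) := by
      funext M
      rw [sq (∑ a, (M k a * d a) ^ 2), Finset.sum_mul_sum]
      exact Finset.sum_congr rfl fun a _ => Finset.sum_congr rfl fun b _ => by ring
    rw [hpt,
      integral_finset_sum _ fun a _ =>
        integrable_finset_sum _ fun b _ => (hint_m a b).const_mul _]
    refine Finset.sum_congr rfl fun a _ => ?_
    rw [integral_finset_sum _ fun b _ => (hint_m a b).const_mul _]
    exact Finset.sum_congr rfl fun b _ => integral_const_mul _ _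
  have hdsum : ∑ a, ∑ b, (d a ^ 2 * d b ^ 2) * m a b
      = (p - p / 3) * (∑ a, d a ^ 4) + (p / 3) * (∑ a, d a ^ 2) ^ 2 := by
    have inner : ∀ a : Fin N, ∑ b, (d a ^ 2 * d b ^ 2) * m a b
        = (p - p / 3) * d a ^ 4 + (p / 3) * (d a ^ 2 * ∑ b, d b ^ 2) := by
      intro a
      have step : ∀ b : Fin N, (d a ^ 2 * d b ^ 2) * m a b
          = (if b = a then (p - p / 3) * d a ^ 4 else 0) + (p / 3) * (d a ^ 2 * d b ^ 2) := by
        intro b; rw [hm_all a b]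
        by_cases hba : b = a
        · rw [if_pos hba, if_pos hba, hba]; ring
        · rw [if_neg hba, if_neg hba]; ring
      rw [Finset.sum_congr rfl fun b _ => step b, Finset.sum_add_distrib,
        Finset.sum_ite_eq' Finset.univ a]
      simp only [Finset.mem_univ, if_true]
      rw [← Finset.mul_sum, ← Finset.mul_sum]
    rw [Finset.sum_congr rfl fun a _ => inner a, Finset.sum_add_distrib,
      ← Finset.mul_sum, ← Finset.mul_sum]
    congr 1
    congr 1
    rw [← Finset.sum_mul, sq]
  -- final arithmetic
  rw [hEX, hEX2, hdsum]
  have hn1 : (1 : ℝ) ≤ (N : ℝ) := by exact_mod_cast hN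
  have hn0 : (0 : ℝ) < (N : ℝ) := by linarith
  have hS4 : 0 ≤ ∑ a, d a ^ 4 := Finset.sum_nonneg fun a _ => by positivity
  have hS2 : 0 ≤ (∑ a, d a ^ 2) ^ 2 := sq_nonneg _
  have hden : (0 : ℝ) < (N : ℝ) ^ 2 + 2 * (N : ℝ) := by positivity
  have hpval : p = 3 / ((N : ℝ) ^ 2 + 2 * (N : ℝ)) := by
    rw [eq_div_iff hden.ne']
    linear_combination 3 * hNp
  have hn2 : (0 : ℝ) < (N : ℝ) ^ 2 := by positivity
  have hq1 : p - p / 3 ≤ 2 / (N : ℝ) ^ 2 := by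
    rw [hpval]
    rw [show (3:ℝ) / ((N : ℝ) ^ 2 + 2 * (N : ℝ)) - 3 / ((N : ℝ) ^ 2 + 2 * (N : ℝ)) / 3
      = 2 / ((N : ℝ) ^ 2 + 2 * (N : ℝ)) from by ring]
    rw [div_le_div_iff₀ hden hn2]
    nlinarith
  have hq2 : p / 3 ≤ 1 / (N : ℝ) ^ 2 := by
    rw [hpval]
    rw [show (3:ℝ) / ((N : ℝ) ^ 2 + 2 * (N : ℝ)) / 3
      = 1 / ((N : ℝ) ^ 2 + 2 * (N : ℝ)) from by ring]
    rw [div_le_div_iff₀ hden hn2]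
    nlinarith
  have hb1 := mul_le_mul_of_nonneg_right hq1 hS4
  have hb2 := mul_le_mul_of_nonneg_right hq2 hS2
  have hrw1 : ((∑ a, d a ^ 2) / (N : ℝ)) ^ 2 = (1 / (N : ℝ) ^ 2) * (∑ a, d a ^ 2) ^ 2 := by
    field_simp
  have hrw2 : (2 / (N : ℝ) ^ 2) * (∑ a, d a ^ 4) = 2 * (∑ a, d a ^ 4) / (N : ℝ) ^ 2 := by
    ring
  linarith [hb1, hb2]

end Core

/-- for `U` Haar-uniform on `O(N₁)` and a fixed diagonal `S` with
diagonal entries `d`, there is a universal constant `C > 0` such that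
`Var[∑ₐ (U_{ka} dₐ)²] ≤ C (‖d‖₄⁴ + ‖d‖₂⁴/N₁) / N₁²`. -/
theorem variance_row_contraction_bound :
    ∃ C : ℝ, 0 < C ∧ ∀ (N₁ : ℕ), 0 < N₁ →
      ∀ {Ω : Type} [inst : MeasurableSpace Ω] (P : Measure Ω),
      IsProbabilityMeasure P →
      ∀ (U : Ω → Matrix (Fin N₁) (Fin N₁) ℝ), Measurable U →
      IsHaarOrthogonal (P.map U) →
      ∀ (d : Fin N₁ → ℝ) (k : Fin N₁),
      variance (fun ω => ∑ a, (U ω k a * d a) ^ 2) P ≤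
        C * ((∑ a, (d a) ^ 4) + (∑ a, (d a) ^ 2) ^ 2 / N₁) / (N₁ : ℝ) ^ 2 := by
  refine ⟨2, by norm_num, ?_⟩
  intro N₁ hN₁ Ω inst P hP U hU hHaar d k
  haveI := hP
  set μ := P.map U with hμ
  have hmem := hHaar.2.1
  have hmemP : ∀ᵐ ω ∂P, U ω ∈ Matrix.orthogonalGroup (Fin N₁) ℝ :=
    (ae_map_iff hU.aemeasurable measurableSet_orth).mp hmem
  have hXm : Measurable fun ω => ∑ a, (U ω k a * d a) ^ 2 :=
    Finset.measurable_sum _ fun a _ =>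
      (((measurable_entry k a).comp hU).mul_const (d a)).pow_const 2
  have hXbound : ∀ᵐ ω ∂P, ‖∑ a, (U ω k a * d a) ^ 2‖ ≤ ∑ a, d a ^ 2 := by
    filter_upwards [hmemP] with ω hω
    rw [Real.norm_eq_abs, abs_of_nonneg (Finset.sum_nonneg fun a _ => sq_nonneg _)]
    refine Finset.sum_le_sum fun a _ => ?_
    have h1 := orth_entry_sq_le hω k a
    nlinarith [sq_nonneg (d a), sq_nonneg (U ω k a)]
  have hX2 : MemLp (fun ω => ∑ a, (U ω k a * d a) ^ 2) 2 P :=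
    MemLp.of_bound hXm.aestronglyMeasurable _ hXbound
  rw [variance_eq_sub hX2]
  -- rewrite the two integrals as integrals over μ
  have hg1m : Measurable fun M : Matrix (Fin N₁) (Fin N₁) ℝ => ∑ a, (M k a * d a) ^ 2 :=
    Finset.measurable_sum _ fun a _ => ((measurable_entry k a).mul_const (d a)).pow_const 2
  have hg2m : Measurable fun M : Matrix (Fin N₁) (Fin N₁) ℝ =>
      (∑ a, (M k a * d a) ^ 2) ^ 2 := hg1m.pow_const 2
  have h1 : (∫ M, (∑ a, (M k a * d a) ^ 2) ∂μ) = ∫ ω, (∑ a, (U ω k a * d a) ^ 2) ∂P :=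
    integral_map hU.aemeasurable hg1m.aestronglyMeasurable
  have h2 : (∫ M, (∑ a, (M k a * d a) ^ 2) ^ 2 ∂μ)
      = ∫ ω, (∑ a, (U ω k a * d a) ^ 2) ^ 2 ∂P :=
    integral_map hU.aemeasurable hg2m.aestronglyMeasurable
  have hPX2 : (∫ ω, ((fun ω => ∑ a, (U ω k a * d a) ^ 2) ^ 2) ω ∂P)
      = ∫ ω, (∑ a, (U ω k a * d a) ^ 2) ^ 2 ∂P := by
    refine integral_congr_ae (Filter.Eventually.of_forall fun ω => ?_)
    simp [Pi.pow_apply]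
  rw [hPX2, ← h1, ← h2]
  have hcore := core_bound hN₁ hHaar d k
  refine le_trans hcore ?_
  have hstep : (∑ a, d a ^ 4) ≤ (∑ a, (d a) ^ 4) + (∑ a, (d a) ^ 2) ^ 2 / N₁ :=
    le_add_of_nonneg_right (by positivity)
  gcongr
end

section
/- Let s₂, …, s_m be i.i.d. with sᵢ = |xᵢ| for standard Gaussians xᵢ, let r_t ≥ 1, and let η ≥ √((r_t−1)/(m−1)). Then the probability that both Σᵢ₌₂^m sᵢ² ≥ (r_t−1)/η² and maxᵢ sᵢ ≤ 1/η hold is at least 1 − ((r_t−1)/(η²(m−1)) · e^{1−(r_t−1)/(η²(m−1))})^{(m−1)/2} − (m−1)(1 − 2·erf(1/η)), where erf here denotes P[0 ≤ g ≤ t] for a standard Gaussian g. -/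
open MeasureTheory ProbabilityTheory
open scoped ENNReal NNReal Real

private lemma gaussian_mgf_neg_sq' {l : ℝ} (hl : 0 ≤ l) :
    ∫ y, Real.exp (-l * y ^ 2) ∂(gaussianReal 0 1) = (Real.sqrt (1 + 2 * l))⁻¹ := by
  have h1 : (1 : NNReal) ≠ 0 := one_ne_zero
  rw [gaussianReal_of_var_ne_zero _ h1]
  have hpdf : gaussianPDF 0 1 = fun y => ((fun y => (gaussianPDFReal 0 1 y).toNNReal) y : ℝ≥0∞) := rfl
  rw [hpdf, integral_withDensity_eq_integral_smul
    ((measurable_gaussianPDFReal 0 1).real_toNNReal) _]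
  have heq : ∀ y : ℝ, (gaussianPDFReal 0 1 y).toNNReal • Real.exp (-l * y ^ 2)
      = (Real.sqrt (2 * Real.pi))⁻¹ * Real.exp (-(l + 1/2) * y ^ 2) := by
    intro y
    rw [NNReal.smul_def, Real.coe_toNNReal _ (gaussianPDFReal_nonneg 0 1 y)]
    simp only [gaussianPDFReal, NNReal.coe_one, mul_one, sub_zero, smul_eq_mul]
    rw [mul_assoc, ← Real.exp_add]
    ring_nf
  simp_rw [heq]
  rw [integral_const_mul, integral_gaussian]
  have hb : (0:ℝ) < l + 1/2 := by linarith
  have hpi := Real.pi_pos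
  rw [← Real.sqrt_inv (2 * Real.pi), ← Real.sqrt_mul (by positivity), ← Real.sqrt_inv]
  congr 1
  field_simp
  ring

private lemma chernoff_aux' {Ω : Type*} [MeasurableSpace Ω] (P : Measure Ω)
    [IsProbabilityMeasure P]
    (n : ℕ) (x : Fin n → Ω → ℝ) (hmeas : ∀ i, Measurable (x i))
    (hindep : iIndepFun x P)
    (hgauss : ∀ i, P.map (x i) = gaussianReal 0 1)
    (a : ℝ) (ha : 0 < a) (han : a ≤ n) :
    (P {ω | ∑ i, (x i ω) ^ 2 ≤ a}).toReal
      ≤ (a / n * Real.exp (1 - a / n)) ^ ((n : ℝ) / 2) := by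
  have hn : 0 < n := by
    rcases Nat.eq_zero_or_pos n with h | h
    · exfalso; rw [h] at han; norm_num at han; linarith
    · exact h
  have hnR : (0:ℝ) < n := Nat.cast_pos.mpr hn
  set z : ℝ := a / n with hz_def
  have hz0 : 0 < z := div_pos ha hnR
  have hz1 : z ≤ 1 := (div_le_one hnR).mpr han
  have haz : a = z * n := (div_mul_cancel₀ a hnR.ne').symm
  set l : ℝ := (z⁻¹ - 1) / 2 with hl_def
  have hl : 0 ≤ l := by
    have : 1 ≤ z⁻¹ := (one_le_inv₀ hz0).mpr hz1
    rw [hl_def]; linarith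
  have h12l : 1 + 2 * l = z⁻¹ := by rw [hl_def]; ring
  set Y : Fin n → Ω → ℝ := fun i ω => x i ω ^ 2 with hY_def
  have hYmeas : ∀ i, Measurable (Y i) := fun i => (hmeas i).pow_const 2
  have hYindep : iIndepFun Y P :=
    hindep.comp (fun _ y => y ^ 2) (fun _ => measurable_id.pow_const 2)
  set t : ℝ := -l with ht_def
  have ht : t ≤ 0 := neg_nonpos.mpr hl
  have h_int : ∀ i, Integrable (fun ω => Real.exp (t * Y i ω)) P := by
    intro i
    refine Integrable.mono' (integrable_const 1)
      (((hYmeas i).const_mul t).exp.aestronglyMeasurable) (ae_of_all _ fun ω => ?_)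
    rw [Real.norm_eq_abs, Real.abs_exp]
    exact Real.exp_le_one_iff.mpr (mul_nonpos_iff.mpr (Or.inr ⟨ht, sq_nonneg _⟩))
  have hmgf : ∀ i, mgf (Y i) P t = (Real.sqrt z⁻¹)⁻¹ := by
    intro i
    have hsm : AEStronglyMeasurable (fun y : ℝ => Real.exp (t * y ^ 2)) (P.map (x i)) :=
      ((measurable_id.pow_const 2).const_mul t).exp.aestronglyMeasurable
    have hmap := integral_map (φ := x i) (hmeas i).aemeasurable hsm
    calc mgf (Y i) P t = ∫ ω, Real.exp (t * (x i ω) ^ 2) ∂P := rfl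
      _ = ∫ y, Real.exp (t * y ^ 2) ∂(P.map (x i)) := hmap.symm
      _ = ∫ y, Real.exp (-l * y ^ 2) ∂(gaussianReal 0 1) := by rw [hgauss i]
      _ = (Real.sqrt (1 + 2 * l))⁻¹ := gaussian_mgf_neg_sq' hl
      _ = (Real.sqrt z⁻¹)⁻¹ := by rw [h12l]
  have hsum_int : Integrable (fun ω => Real.exp (t * (∑ i, Y i) ω)) P :=
    hYindep.integrable_exp_mul_sum (s := Finset.univ) hYmeas (fun i _ => h_int i)
  have hset : {ω | ∑ i, (x i ω) ^ 2 ≤ a} = {ω | (∑ i, Y i) ω ≤ a} := by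
    ext ω; simp [hY_def]
  have hcher := measure_le_le_exp_mul_mgf (μ := P) (X := ∑ i, Y i) a ht hsum_int
  rw [hYindep.mgf_sum hYmeas Finset.univ] at hcher
  simp_rw [hmgf] at hcher
  rw [hset]
  refine hcher.trans (le_of_eq ?_)
  rw [Finset.prod_const, Finset.card_univ, Fintype.card_fin]
  have h1 : (Real.sqrt z⁻¹)⁻¹ = Real.sqrt z := by
    rw [Real.sqrt_inv, inv_inv]
  have h2 : (z * Real.exp (1 - z)) ^ ((n : ℝ) / 2)
      = Real.sqrt z ^ n * Real.exp ((1 - z) * (n / 2)) := by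
    rw [Real.mul_rpow hz0.le (Real.exp_nonneg _), ← Real.exp_mul,
      show (n : ℝ) / 2 = (1/2 : ℝ) * n by ring, Real.rpow_mul hz0.le,
      Real.rpow_natCast, ← Real.sqrt_eq_rpow]
  rw [h1, h2, mul_comm (Real.sqrt z ^ n)]
  congr 1
  have hzne : z ≠ 0 := hz0.ne'
  rw [ht_def, neg_neg, hl_def, haz]
  field_simp

/-- `erf t` here denotes `P[0 ≤ g ≤ t]` for a standard Gaussian `g`. -/
noncomputable def erf (t : ℝ) : ℝ := ((gaussianReal 0 1) (Set.Icc 0 t)).toReal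

private lemma gaussian_symm_Icc' {t : ℝ} :
    (gaussianReal 0 1) (Set.Icc (-t) 0) = (gaussianReal 0 1) (Set.Icc 0 t) := by
  have hmap : (gaussianReal 0 1).map (fun y => -y) = gaussianReal 0 1 := by
    have h := gaussianReal_map_const_mul (μ := 0) (v := 1) (-1 : ℝ)
    simp only [neg_one_mul, mul_zero] at h
    rw [h]
    congr 1
    ext : 1
    norm_num
  conv_lhs => rw [← hmap]
  rw [Measure.map_apply measurable_neg measurableSet_Icc]
  congr 1
  ext y
  simp only [Set.mem_preimage, Set.mem_Icc]
  constructor <;> (rintro ⟨h1, h2⟩; constructor <;> linarith)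

private lemma gaussian_Icc_eq' (t : ℝ) (ht : 0 ≤ t) :
    (gaussianReal 0 1) (Set.Icc (-t) t)
      = (gaussianReal 0 1) (Set.Icc 0 t) + (gaussianReal 0 1) (Set.Icc 0 t) := by
  have h0 : (gaussianReal 0 1) {(0:ℝ)} = 0 :=
    gaussianReal_absolutelyContinuous 0 one_ne_zero (measure_singleton 0)
  have hIoc : (gaussianReal 0 1) (Set.Ioc 0 t) = (gaussianReal 0 1) (Set.Icc 0 t) := by
    refine le_antisymm (measure_mono Set.Ioc_subset_Icc_self) ?_
    calc (gaussianReal 0 1) (Set.Icc 0 t) ≤ (gaussianReal 0 1) ({0} ∪ Set.Ioc 0 t) := by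
          refine measure_mono fun y hy => ?_
          rcases eq_or_lt_of_le hy.1 with h | h
          · exact Or.inl (by simp [← h])
          · exact Or.inr ⟨h, hy.2⟩
      _ ≤ (gaussianReal 0 1) {0} + (gaussianReal 0 1) (Set.Ioc 0 t) := measure_union_le _ _
      _ = (gaussianReal 0 1) (Set.Ioc 0 t) := by rw [h0, zero_add]
  rw [← Set.Icc_union_Ioc_eq_Icc (neg_nonpos.mpr ht) ht,
    measure_union ?_ measurableSet_Ioc, gaussian_symm_Icc', hIoc]
  exact Set.disjoint_left.mpr fun y hy1 hy2 => absurd hy1.2 (not_le.mpr hy2.1)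

private lemma two_erf_le_one' {t : ℝ} (ht : 0 ≤ t) : 2 * erf t ≤ 1 := by
  have h := prob_le_one (μ := gaussianReal 0 1) (s := Set.Icc (-t) t)
  rw [gaussian_Icc_eq' t ht] at h
  have h2 := ENNReal.toReal_mono ENNReal.one_ne_top h
  rw [ENNReal.toReal_add (measure_ne_top _ _) (measure_ne_top _ _), ENNReal.toReal_one] at h2
  rw [erf]; linarith

private lemma gaussian_tail' {t : ℝ} (ht : 0 ≤ t) :
    (gaussianReal 0 1) {y : ℝ | t < |y|} = ENNReal.ofReal (1 - 2 * erf t) := by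
  have hset : {y : ℝ | t < |y|} = (Set.Icc (-t) t)ᶜ := by
    ext y
    simp only [Set.mem_setOf_eq, Set.mem_compl_iff, Set.mem_Icc, ← abs_le, not_le]
  rw [hset, prob_compl_eq_one_sub measurableSet_Icc, gaussian_Icc_eq' t ht]
  have hof : (gaussianReal 0 1) (Set.Icc 0 t) = ENNReal.ofReal (erf t) :=
    (ENNReal.ofReal_toReal (measure_ne_top _ _)).symm
  have herf : (0:ℝ) ≤ erf t := ENNReal.toReal_nonneg
  rw [hof, ← ENNReal.ofReal_add herf herf,
    ← ENNReal.ofReal_one, ← ENNReal.ofReal_sub _ (by positivity)]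
  norm_num [two_mul]

/-- for `s i = |x i|` with `x i` i.i.d. standard Gaussians,
`r_t ≥ 1` and `η ≥ √((r_t−1)/(m−1))` positive, the probability that both
`∑ sᵢ² ≥ (r_t−1)/η²` and `maxᵢ sᵢ ≤ 1/η` hold is at least
`1 − ((r_t−1)/(η²(m−1)) e^{1−(r_t−1)/(η²(m−1))})^{(m−1)/2} − (m−1)(1 − 2 erf(1/η))`. -/
theorem acceptance_probability_bound {Ω : Type*} [MeasurableSpace Ω]
    (P : Measure Ω) [IsProbabilityMeasure P]
    (m : ℕ) (hm : 2 ≤ m) (x : Fin (m - 1) → Ω → ℝ)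
    (hmeas : ∀ i, Measurable (x i))
    (hindep : iIndepFun x P)
    (hgauss : ∀ i, P.map (x i) = gaussianReal 0 1)
    (rt η : ℝ) (hrt : 1 ≤ rt) (hη : 0 < η)
    (hηlb : Real.sqrt ((rt - 1) / ((m : ℝ) - 1)) ≤ η) :
    ENNReal.ofReal
        (1 - ((rt - 1) / (η ^ 2 * ((m : ℝ) - 1)) *
            Real.exp (1 - (rt - 1) / (η ^ 2 * ((m : ℝ) - 1)))) ^ (((m : ℝ) - 1) / 2)
          - ((m : ℝ) - 1) * (1 - 2 * erf (1 / η))) ≤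
      P {ω | (rt - 1) / η ^ 2 ≤ ∑ i, |x i ω| ^ 2 ∧ ∀ i, |x i ω| ≤ 1 / η} := by
  classical
  have hcast : ((m - 1 : ℕ) : ℝ) = (m : ℝ) - 1 := by
    have h1 : 1 ≤ m := by omega
    push_cast [Nat.cast_sub h1]
    ring
  have hN0 : (0:ℝ) < (m:ℝ) - 1 := by
    have : (2:ℝ) ≤ (m:ℝ) := by exact_mod_cast hm
    linarith
  set N : ℝ := (m : ℝ) - 1 with hN_def
  set a : ℝ := (rt - 1) / η ^ 2 with ha_def
  set z : ℝ := (rt - 1) / (η ^ 2 * N) with hz_def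
  set q1 : ℝ := (z * Real.exp (1 - z)) ^ (N / 2) with hq1_def
  set q2 : ℝ := N * (1 - 2 * erf (1 / η)) with hq2_def
  have hz0 : 0 ≤ z := by
    rw [hz_def]
    have : (0:ℝ) ≤ rt - 1 := by linarith
    positivity
  have hq1_nonneg : 0 ≤ q1 :=
    Real.rpow_nonneg (mul_nonneg hz0 (Real.exp_nonneg _)) _
  have hηinv : (0:ℝ) ≤ 1 / η := by positivity
  have hq2_nonneg : 0 ≤ q2 := by
    have := two_erf_le_one' hηinv
    rw [hq2_def]
    nlinarith
  -- tail bound for each coordinate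
  have hB : P {ω | ¬ ∀ i, |x i ω| ≤ 1 / η} ≤ ENNReal.ofReal q2 := by
    have hsub : {ω | ¬ ∀ i, |x i ω| ≤ 1 / η} ⊆ ⋃ i, (x i) ⁻¹' {y : ℝ | 1 / η < |y|} := by
      intro ω hω
      rw [Set.mem_setOf_eq, not_forall] at hω
      obtain ⟨i, hi⟩ := hω
      exact Set.mem_iUnion.mpr ⟨i, not_le.mp hi⟩
    have hsetm : MeasurableSet {y : ℝ | 1 / η < |y|} :=
      measurableSet_lt measurable_const measurable_abs
    have hone : ∀ i, P ((x i) ⁻¹' {y : ℝ | 1 / η < |y|})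
        = ENNReal.ofReal (1 - 2 * erf (1 / η)) := by
      intro i
      rw [← Measure.map_apply (hmeas i) hsetm, hgauss i, gaussian_tail' hηinv]
    calc P {ω | ¬ ∀ i, |x i ω| ≤ 1 / η}
        ≤ P (⋃ i, (x i) ⁻¹' {y : ℝ | 1 / η < |y|}) := measure_mono hsub
      _ ≤ ∑' i, P ((x i) ⁻¹' {y : ℝ | 1 / η < |y|}) := measure_iUnion_le _
      _ = ∑ i : Fin (m - 1), ENNReal.ofReal (1 - 2 * erf (1 / η)) := by
          rw [tsum_fintype]; exact Finset.sum_congr rfl fun i _ => hone i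
      _ = (m - 1 : ℕ) * ENNReal.ofReal (1 - 2 * erf (1 / η)) := by
          rw [Finset.sum_const, Finset.card_univ, Fintype.card_fin, nsmul_eq_mul]
      _ = ENNReal.ofReal q2 := by
          rw [hq2_def, ENNReal.ofReal_mul (by linarith), ← hcast, ENNReal.ofReal_natCast]
  -- Chernoff bound for the sum
  have hA : P {ω | ¬ (rt - 1) / η ^ 2 ≤ ∑ i, |x i ω| ^ 2} ≤ ENNReal.ofReal q1 := by
    rcases eq_or_lt_of_le hrt with hrt1 | hrt1
    · have : {ω | ¬ (rt - 1) / η ^ 2 ≤ ∑ i, |x i ω| ^ 2} = ∅ := by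
        ext ω
        simp only [Set.mem_setOf_eq, Set.mem_empty_iff_false, iff_false, not_not, ← hrt1]
        have : (0:ℝ) ≤ ∑ i, |x i ω| ^ 2 := Finset.sum_nonneg fun i _ => sq_nonneg _
        simpa using this
      rw [this, measure_empty]
      exact zero_le
    · have ha0 : 0 < a := by
        rw [ha_def]; have : (0:ℝ) < rt - 1 := by linarith
        positivity
      have haN : a ≤ N := by
        have hsq : (rt - 1) / N ≤ η ^ 2 := by
          have := Real.sq_sqrt (le_of_lt (div_pos (by linarith) hN0) :
            (0:ℝ) ≤ (rt - 1) / ((m:ℝ) - 1))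
          calc (rt - 1) / N = Real.sqrt ((rt - 1) / ((m:ℝ) - 1)) ^ 2 := by rw [this]
            _ ≤ η ^ 2 := by
                have h' := Real.sqrt_nonneg ((rt - 1) / ((m:ℝ) - 1))
                nlinarith
        rw [ha_def, div_le_iff₀ (by positivity : (0:ℝ) < η ^ 2)]
        calc rt - 1 ≤ η ^ 2 * N := by
              rw [div_le_iff₀ hN0] at hsq; linarith [hsq]
          _ = N * η ^ 2 := mul_comm _ _
      have han : a ≤ ((m - 1 : ℕ) : ℝ) := by rw [hcast]; exact haN
      have hsub : {ω | ¬ (rt - 1) / η ^ 2 ≤ ∑ i, |x i ω| ^ 2}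
          ⊆ {ω | ∑ i, (x i ω) ^ 2 ≤ a} := by
        intro ω hω
        simp only [Set.mem_setOf_eq, not_le] at hω ⊢
        calc ∑ i, (x i ω) ^ 2 = ∑ i, |x i ω| ^ 2 := by simp [sq_abs]
          _ ≤ a := hω.le
      have hcher := chernoff_aux' P (m - 1) x hmeas hindep hgauss a ha0 han
      have hq1eq : (a / ((m - 1 : ℕ) : ℝ) * Real.exp (1 - a / ((m - 1 : ℕ) : ℝ)))
          ^ (((m - 1 : ℕ) : ℝ) / 2) = q1 := by
        rw [hcast]
        have : a / N = z := by rw [ha_def, hz_def, div_div]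
        rw [this, hq1_def]
      rw [hq1eq] at hcher
      calc P {ω | ¬ (rt - 1) / η ^ 2 ≤ ∑ i, |x i ω| ^ 2}
          ≤ P {ω | ∑ i, (x i ω) ^ 2 ≤ a} := measure_mono hsub
        _ = ENNReal.ofReal ((P {ω | ∑ i, (x i ω) ^ 2 ≤ a}).toReal) :=
            (ENNReal.ofReal_toReal (measure_ne_top _ _)).symm
        _ ≤ ENNReal.ofReal q1 := ENNReal.ofReal_le_ofReal hcher
  -- assembly
  set E : Set Ω := {ω | (rt - 1) / η ^ 2 ≤ ∑ i, |x i ω| ^ 2 ∧ ∀ i, |x i ω| ≤ 1 / η} with hE_def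
  have hEc : P Eᶜ ≤ ENNReal.ofReal q1 + ENNReal.ofReal q2 := by
    have hsub : Eᶜ ⊆ {ω | ¬ (rt - 1) / η ^ 2 ≤ ∑ i, |x i ω| ^ 2}
        ∪ {ω | ¬ ∀ i, |x i ω| ≤ 1 / η} := by
      intro ω hω
      rw [Set.mem_compl_iff, hE_def, Set.mem_setOf_eq, not_and_or] at hω
      exact hω
    calc P Eᶜ ≤ P ({ω | ¬ (rt - 1) / η ^ 2 ≤ ∑ i, |x i ω| ^ 2}
          ∪ {ω | ¬ ∀ i, |x i ω| ≤ 1 / η}) := measure_mono hsub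
      _ ≤ P {ω | ¬ (rt - 1) / η ^ 2 ≤ ∑ i, |x i ω| ^ 2}
          + P {ω | ¬ ∀ i, |x i ω| ≤ 1 / η} := measure_union_le _ _
      _ ≤ ENNReal.ofReal q1 + ENNReal.ofReal q2 := add_le_add hA hB
  have hunion : (1 : ℝ≥0∞) ≤ P E + P Eᶜ := by
    calc (1 : ℝ≥0∞) = P (E ∪ Eᶜ) := by rw [Set.union_compl_self, measure_univ]
      _ ≤ P E + P Eᶜ := measure_union_le _ _
  calc ENNReal.ofReal (1 - q1 - q2)
      = ENNReal.ofReal 1 - (ENNReal.ofReal q1 + ENNReal.ofReal q2) := by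
        rw [sub_sub, ENNReal.ofReal_sub _ (add_nonneg hq1_nonneg hq2_nonneg),
          ENNReal.ofReal_add hq1_nonneg hq2_nonneg]
    _ ≤ 1 - P Eᶜ := by
        rw [ENNReal.ofReal_one]
        exact tsub_le_tsub_left hEc 1
    _ ≤ P E := by
        rw [tsub_le_iff_right]
        exact hunion
end
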